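/- arXiv:2206.05088 — 2 statements merged into one kernel-verified Lean document; each statement's English description precedes it below -/
import Mathlib

section
/- Let f₂ : ℝ^{n₂} → ℝ, σ > 0, A₁ ∈ ℝ^{l×n₁}, A₂ ∈ ℝ^{l×n₂} with A₂ ≠ 0, b ∈ ℝ^l, γ ∈ (0, (1+√5)/2], and set σ' := σ/σ_max(A₂ᵀA₂). Let β⁻, β, β⁺ > 0 satisfy β⁻ ≤ β ≤ β⁺, β(β + σ') ≥ (β⁺)², and β³/(β + σ') ≤ (β⁻)². Let x₁^k, x₁^{k+1} ∈ ℝ^{n₁}, x₂^k, x₂^{k+1}, x₂' ∈ ℝ^{n₂}, λ^{k−1}, λ^k, λ ∈ ℝ^l; write e₀ := A₁x₁^k + A₂x₂^k − b and e := A₁x₁^{k+1} + A₂x₂^{k+1} − b. Assume: (i) for all x₂: f₂(x₂) − f₂(x₂^{k+1}) + (x₂ − x₂^{k+1})ᵀ[−A₂ᵀλ^k + β A₂ᵀ e] ≥ (σ/2)‖x₂^{k+1} − x₂‖²; (ii) for all x₂: f₂(x₂) − f₂(x₂^k) + (x₂ − x₂^k)ᵀ[−A₂ᵀλ^{k−1}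 + β⁻ A₂ᵀ e₀] ≥ (σ/2)‖x₂^k − x₂‖²; (iii) λ^k = λ^{k−1} − γβ⁻ e₀; and define λ^{k+1} := λ^k − γβ e and λ̃ := λ^k − β(A₁x₁^{k+1} + A₂x₂^k − b). Define H := blockdiag(β A₂ᵀA₂, (1/(γβ)) I_l), G := [ (1−γ)β A₂ᵀA₂, −(1−γ)A₂ᵀ ; −(1−γ)A₂, ((2−γ)/β) I_l ], H₀(s) := blockdiag(s² A₂ᵀA₂, (1/γ) I_l) for s > 0, Θ := (1−γ)²(β⁻)²‖e₀‖², Θ⁺ := (1−γ)² β² ‖e‖², and v^k := (x₂^k, λ^k), v^{k+1} := (x₂^{k+1}, λ^{k+1}), ṽ := (x₂^{k+1}, λ̃), v' := (x₂', λ). Then β( ‖v^{k+1} − v'‖²_H + σ‖x₂^{k+1} − x₂'‖² − ‖v^k − v'‖²_H + ‖v^k − ṽ‖²_G ) ≥ ‖v^{k+1} − v'‖²_{H₀(β⁺)} − ‖v^k − v'‖²_{H₀(β)} + Θ⁺ − Θ. -/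
open Matrix

/-- `qf D w = wᵀ D w`, the (possibly indefinite) quadratic form `‖w‖²_D`. -/
noncomputable def qf {m : Type*} [Fintype m] (D : Matrix m m ℝ) (w : m → ℝ) : ℝ :=
  w ⬝ᵥ D.mulVec w

/-- `maxEig B` is the largest eigenvalue of `B` (for a symmetric matrix, the
supremum of its eigenvalue set), denoted `σ_max(B)` in the paper. -/
noncomputable def maxEig {m : Type*} [Fintype m] (B : Matrix m m ℝ) : ℝ :=
  sSup {μ : ℝ | ∃ v : m → ℝ, v ≠ 0 ∧ B.mulVec v = μ • v}

lemma dot_self_nonneg' {m : Type*} [Fintype m] (v : m → ℝ) : 0 ≤ v ⬝ᵥ v :=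
  Finset.sum_nonneg fun i _ => mul_self_nonneg (v i)

lemma dot_At' {l n : ℕ} (A : Matrix (Fin l) (Fin n) ℝ) (x : Fin n → ℝ) (y : Fin l → ℝ) :
    x ⬝ᵥ Aᵀ.mulVec y = (A.mulVec x) ⬝ᵥ y := by
  rw [dotProduct_mulVec, vecMul_transpose]

lemma dot_AtA' {l n : ℕ} (A : Matrix (Fin l) (Fin n) ℝ) (x y : Fin n → ℝ) :
    x ⬝ᵥ (Aᵀ * A).mulVec y = (A.mulVec x) ⬝ᵥ (A.mulVec y) := by
  rw [← mulVec_mulVec, dot_At']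

lemma qf_le_maxEig' {n : ℕ} (B : Matrix (Fin n) (Fin n) ℝ) (hB : B.IsHermitian)
    (v : Fin n → ℝ) : v ⬝ᵥ B.mulVec v ≤ maxEig B * (v ⬝ᵥ v) := by
  classical
  set U : Matrix (Fin n) (Fin n) ℝ := (hB.eigenvectorUnitary : Matrix (Fin n) (Fin n) ℝ) with hU
  have hU1 : U * star U = 1 := Matrix.mem_unitaryGroup_iff.mp hB.eigenvectorUnitary.2
  have hU1' : star U * U = 1 := Matrix.mem_unitaryGroup_iff'.mp hB.eigenvectorUnitary.2
  have hdiag : B = U * Matrix.diagonal hB.eigenvalues * star U := by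
    have := hB.spectral_theorem
    simpa using this
  have hvecmul : ∀ x : Fin n → ℝ, x ᵥ* U = star U *ᵥ x := by
    intro x
    ext i
    simp [vecMul, mulVec, dotProduct, Matrix.star_apply, mul_comm]
  have hset : {μ : ℝ | ∃ w : Fin n → ℝ, w ≠ 0 ∧ B.mulVec w = μ • w}
      = Set.range hB.eigenvalues := by
    ext μ
    constructor
    · rintro ⟨w, hw0, hw⟩
      set c := star U *ᵥ w with hc
      have hwc : U *ᵥ c = w := by rw [hc, mulVec_mulVec, hU1, one_mulVec]
      have hc0 : c ≠ 0 := fun h => hw0 (by rw [← hwc, h, mulVec_zero])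
      have hDc : Matrix.diagonal hB.eigenvalues *ᵥ c = μ • c := by
        have h0 : star U *ᵥ (B *ᵥ w) = star U *ᵥ (μ • w) := by rw [hw]
        rw [hdiag, mulVec_mulVec, mulVec_smul] at h0
        have h2 : star U * (U * Matrix.diagonal hB.eigenvalues * star U)
            = Matrix.diagonal hB.eigenvalues * star U := by
          rw [← Matrix.mul_assoc, ← Matrix.mul_assoc, hU1', Matrix.one_mul]
        rw [h2, ← mulVec_mulVec] at h0
        rw [hc]
        exact h0
      obtain ⟨i, hi⟩ := Function.ne_iff.mp hc0
      refine ⟨i, ?_⟩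
      have h3 := congrFun hDc i
      rw [mulVec_diagonal] at h3
      have h4 : hB.eigenvalues i * c i = μ * c i := by simpa using h3
      exact mul_right_cancel₀ hi h4
    · rintro ⟨i, rfl⟩
      refine ⟨hB.eigenvectorBasis i, ?_, hB.mulVec_eigenvectorBasis i⟩
      exact fun h => hB.eigenvectorBasis.orthonormal.ne_zero i ((WithLp.ofLp_eq_zero 2).mp h)
  have hBdd : BddAbove (Set.range hB.eigenvalues) := (Set.finite_range _).bddAbove
  have hle : ∀ i, hB.eigenvalues i ≤ maxEig B := by
    intro i
    rw [maxEig, hset]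
    exact le_csSup hBdd ⟨i, rfl⟩
  set c := star U *ᵥ v with hc
  have hdot : ∀ x : Fin n → ℝ, v ⬝ᵥ U *ᵥ x = c ⬝ᵥ x := by
    intro x
    rw [dotProduct_mulVec, hvecmul]
  have h1 : v ⬝ᵥ B.mulVec v = ∑ i, hB.eigenvalues i * (c i)^2 := by
    conv_lhs => rw [hdiag]
    rw [← mulVec_mulVec, ← mulVec_mulVec, hdot, ← hc]
    simp [dotProduct, mulVec_diagonal]
    apply Finset.sum_congr rfl
    intro i _
    ring
  have h2 : v ⬝ᵥ v = ∑ i, (c i)^2 := by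
    have h0 : v ⬝ᵥ v = v ⬝ᵥ (U * star U) *ᵥ v := by rw [hU1, one_mulVec]
    rw [h0, ← mulVec_mulVec, hdot, ← hc]
    simp [dotProduct]
    apply Finset.sum_congr rfl
    intro i _
    ring
  rw [h1, h2, Finset.mul_sum]
  apply Finset.sum_le_sum
  intro i _
  exact mul_le_mul_of_nonneg_right (hle i) (sq_nonneg _)

lemma sum_elim_sub' {α β : Type*} (a c : α → ℝ) (b d : β → ℝ) :
    Sum.elim a b - Sum.elim c d = Sum.elim (a - c) (b - d) := by
  funext i; cases i <;> simp

lemma qf_diagBlocks' {n l : ℕ} (s t : ℝ) (A : Matrix (Fin l) (Fin n) ℝ)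
    (x x' : Fin n → ℝ) (y y' : Fin l → ℝ) :
    qf (Matrix.fromBlocks (s • (Aᵀ * A)) 0 0 (t • 1)) (Sum.elim x y - Sum.elim x' y') =
      s * ((A.mulVec (x - x')) ⬝ᵥ (A.mulVec (x - x'))) + t * ((y - y') ⬝ᵥ (y - y')) := by
  rw [qf, sum_elim_sub', fromBlocks_mulVec, sumElim_dotProduct_sumElim]
  simp only [Sum.elim_comp_inl, Sum.elim_comp_inr]
  simp only [zero_mulVec, add_zero, zero_add, smul_mulVec, one_mulVec,
    dotProduct_smul, smul_eq_mul, dot_AtA']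

lemma qf_Gform' {n l : ℕ} (γ β : ℝ) (A : Matrix (Fin l) (Fin n) ℝ)
    (x x' : Fin n → ℝ) (y y' : Fin l → ℝ) :
    qf (Matrix.fromBlocks (((1 - γ) * β) • (Aᵀ * A)) (-((1 - γ) • Aᵀ))
        (-((1 - γ) • A)) (((2 - γ) / β) • 1)) (Sum.elim x y - Sum.elim x' y') =
      (1 - γ) * β * ((A.mulVec (x - x')) ⬝ᵥ (A.mulVec (x - x')))
        - 2 * (1 - γ) * ((A.mulVec (x - x')) ⬝ᵥ (y - y'))
        + ((2 - γ) / β) * ((y - y') ⬝ᵥ (y - y')) := by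
  rw [qf, sum_elim_sub', fromBlocks_mulVec, sumElim_dotProduct_sumElim]
  simp only [Sum.elim_comp_inl, Sum.elim_comp_inr]
  simp only [neg_mulVec, smul_mulVec, one_mulVec, dotProduct_add, dotProduct_neg,
    dotProduct_smul, smul_eq_mul, dot_AtA', dot_At']
  rw [dotProduct_comm (y - y') (A.mulVec (x - x'))]
  ring

lemma final_ineq' (β βm βp γ σ σ' U U0 a Dd Dk W EW E E0 E0W P : ℝ)
    (hβ : 0 < β) (hγ0 : 0 < γ) (hγ2 : γ ^ 2 ≤ γ + 1) (hσ'pos : 0 < σ')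
    (hgrow : β * (β + σ') ≥ βp ^ 2)
    (f1 : σ' * U ≤ σ * a) (f2 : σ' * W ≤ σ * P)
    (hcross : β * EW + (γ - 1) * βm * E0W ≥ σ * P)
    (hE : 0 ≤ E) (hE0 : 0 ≤ E0) (hW : 0 ≤ W) (hU : 0 ≤ U)
    (hsq : 0 ≤ β ^ 2 * W - 2 * β * ((γ - 1) * βm) * E0W + ((γ - 1) * βm) ^ 2 * E0) :
    β * ((β * U + 1 / (γ * β) * Dd) + σ * a - (β * U0 + 1 / (γ * β) * Dk)
        + ((1 - γ) * β * W - 2 * (1 - γ) * (β * EW + β * W)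
          + (2 - γ) / β * (β ^ 2 * (E + 2 * EW + W))))
      ≥ (βp ^ 2 * U + 1 / γ * Dd) - (β ^ 2 * U0 + 1 / γ * Dk)
        + (1 - γ) ^ 2 * β ^ 2 * E - (1 - γ) ^ 2 * βm ^ 2 * E0 := by
  have hβne : β ≠ 0 := hβ.ne'
  have hγne : γ ≠ 0 := hγ0.ne'
  have hL : β * ((β * U + 1 / (γ * β) * Dd) + σ * a - (β * U0 + 1 / (γ * β) * Dk)
        + ((1 - γ) * β * W - 2 * (1 - γ) * (β * EW + β * W)
          + (2 - γ) / β * (β ^ 2 * (E + 2 * EW + W))))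
      = β ^ 2 * U + β * (σ * a) + 1 / γ * Dd - β ^ 2 * U0 - 1 / γ * Dk
        + β ^ 2 * (E + 2 * EW + W) + (1 - γ) * β ^ 2 * E := by
    field_simp
    ring
  rw [hL]
  have t1 : 0 ≤ β * (σ * a - σ' * U) := mul_nonneg hβ.le (by linarith)
  have t2 : 0 ≤ (β * (β + σ') - βp ^ 2) * U := mul_nonneg (by linarith) hU
  have t3 : 0 ≤ β ^ 2 * ((1 + γ - γ ^ 2) * E) :=
    mul_nonneg (sq_nonneg β) (mul_nonneg (by linarith) hE)
  have t4 : 0 ≤ 2 * β * (σ' * W) :=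
    mul_nonneg (by linarith) (mul_nonneg hσ'pos.le hW)
  have t6 : 0 ≤ 2 * β * ((β * EW + (γ - 1) * βm * E0W) - σ * P) :=
    mul_nonneg (by linarith) (by linarith)
  have t7 : 0 ≤ 2 * β * (σ * P - σ' * W) := mul_nonneg (by linarith) (by linarith)
  nlinarith [t1, t2, t3, t4, hsq, t6, t7]
set_option maxHeartbeats 1000000 in
/-- Theorem 3.3: ADMM for the two-block problem (P2) with `f₂` `σ`-strongly
convex and dual step length `γβ`, `γ ∈ (0, (1+√5)/2]`, satisfies the additional
convergence condition (CC3) with `rᵏ = β`, `Θ = (1-γ)²(β⁻)²‖e₀‖²`,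
`Θ⁺ = (1-γ)²β²‖e‖²` and `H₀(s) = blockdiag(s²A₂ᵀA₂, (1/γ)I)`. -/
theorem stmt13 {n₁ n₂ l : ℕ}
    (f₂ : (Fin n₂ → ℝ) → ℝ) (σ : ℝ) (hσ : 0 < σ)
    (A₁ : Matrix (Fin l) (Fin n₁) ℝ) (A₂ : Matrix (Fin l) (Fin n₂) ℝ)
    (hA₂ : A₂ ≠ 0) (b : Fin l → ℝ)
    (γ : ℝ) (hγ : γ ∈ Set.Ioc (0 : ℝ) ((1 + Real.sqrt 5) / 2))
    (σ' : ℝ) (hσ' : σ' = σ / maxEig (A₂ᵀ * A₂))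
    (βm β βp : ℝ) (hβm : 0 < βm) (hβ : 0 < β) (hβp : 0 < βp)
    (hle1 : βm ≤ β) (hle2 : β ≤ βp)
    (hgrow : β * (β + σ') ≥ βp ^ 2)
    (hdecay : β ^ 3 / (β + σ') ≤ βm ^ 2)
    (x1k x1kk : Fin n₁ → ℝ) (x2k x2kk x2' : Fin n₂ → ℝ)
    (lamkm lamk lam : Fin l → ℝ)
    (e₀ e : Fin l → ℝ)
    (he₀ : e₀ = A₁.mulVec x1k + A₂.mulVec x2k - b)
    (he : e = A₁.mulVec x1kk + A₂.mulVec x2kk - b)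
    (hi : ∀ x₂ : Fin n₂ → ℝ,
      f₂ x₂ - f₂ x2kk + (x₂ - x2kk) ⬝ᵥ (-(A₂ᵀ.mulVec lamk) + β • A₂ᵀ.mulVec e)
        ≥ σ / 2 * ((x2kk - x₂) ⬝ᵥ (x2kk - x₂)))
    (hii : ∀ x₂ : Fin n₂ → ℝ,
      f₂ x₂ - f₂ x2k + (x₂ - x2k) ⬝ᵥ (-(A₂ᵀ.mulVec lamkm) + βm • A₂ᵀ.mulVec e₀)
        ≥ σ / 2 * ((x2k - x₂) ⬝ᵥ (x2k - x₂)))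
    (hiii : lamk = lamkm - (γ * βm) • e₀)
    (lamkk lamt : Fin l → ℝ)
    (hlamkk : lamkk = lamk - (γ * β) • e)
    (hlamt : lamt = lamk - β • (A₁.mulVec x1kk + A₂.mulVec x2k - b))
    (H : Matrix (Fin n₂ ⊕ Fin l) (Fin n₂ ⊕ Fin l) ℝ)
    (hH : H = Matrix.fromBlocks (β • (A₂ᵀ * A₂)) 0 0 ((1 / (γ * β)) • 1))
    (G : Matrix (Fin n₂ ⊕ Fin l) (Fin n₂ ⊕ Fin l) ℝ)
    (hG : G = Matrix.fromBlocks (((1 - γ) * β) • (A₂ᵀ * A₂)) (-((1 - γ) • A₂ᵀ))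
        (-((1 - γ) • A₂)) (((2 - γ) / β) • 1))
    (H₀ : ℝ → Matrix (Fin n₂ ⊕ Fin l) (Fin n₂ ⊕ Fin l) ℝ)
    (hH₀ : ∀ s, H₀ s = Matrix.fromBlocks (s ^ 2 • (A₂ᵀ * A₂)) 0 0 ((1 / γ) • 1))
    (Θ Θp : ℝ)
    (hΘ : Θ = (1 - γ) ^ 2 * βm ^ 2 * (e₀ ⬝ᵥ e₀))
    (hΘp : Θp = (1 - γ) ^ 2 * β ^ 2 * (e ⬝ᵥ e)) :
    β * (qf H (Sum.elim x2kk lamkk - Sum.elim x2' lam)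
        + σ * ((x2kk - x2') ⬝ᵥ (x2kk - x2'))
        - qf H (Sum.elim x2k lamk - Sum.elim x2' lam)
        + qf G (Sum.elim x2k lamk - Sum.elim x2kk lamt))
      ≥ qf (H₀ βp) (Sum.elim x2kk lamkk - Sum.elim x2' lam)
        - qf (H₀ β) (Sum.elim x2k lamk - Sum.elim x2' lam)
        + Θp - Θ := by
  obtain ⟨hγ0, hγle⟩ := hγ
  -- abbreviations for the vectors involved
  set w : Fin l → ℝ := A₂.mulVec (x2k - x2kk) with hw
  -- positivity of the largest eigenvalue
  have hAA : (A₂ᵀ * A₂).IsHermitian := by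
    have h := Matrix.isHermitian_conjTranspose_mul_self A₂
    rwa [conjTranspose_eq_transpose_of_trivial] at h
  have hbound : ∀ v : Fin n₂ → ℝ,
      (A₂.mulVec v) ⬝ᵥ (A₂.mulVec v) ≤ maxEig (A₂ᵀ * A₂) * (v ⬝ᵥ v) := by
    intro v
    have h := qf_le_maxEig' (A₂ᵀ * A₂) hAA v
    rwa [dot_AtA'] at h
  have hlmax : 0 < maxEig (A₂ᵀ * A₂) := by
    have hex : ∃ i j, A₂ i j ≠ 0 := by
      by_contra h
      push_neg at h
      exact hA₂ (Matrix.ext fun i j => (h i j).trans (Matrix.zero_apply i j).symm)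
    obtain ⟨i, j, hij⟩ := hex
    have h1 := hbound (Pi.single j 1)
    have h2 : A₂.mulVec (Pi.single j 1) = fun i' => A₂ i' j := by
      funext i'
      simp [mulVec_single]
    have h3 : 0 < (A₂.mulVec (Pi.single j 1)) ⬝ᵥ (A₂.mulVec (Pi.single j 1)) := by
      rw [h2]
      have hle' : A₂ i j * A₂ i j ≤ ∑ i', A₂ i' j * A₂ i' j :=
        Finset.single_le_sum (f := fun i' => A₂ i' j * A₂ i' j)
          (fun k _ => mul_self_nonneg _) (Finset.mem_univ i)
      have : 0 < A₂ i j * A₂ i j := mul_self_pos.mpr hij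
      calc (0:ℝ) < A₂ i j * A₂ i j := this
        _ ≤ _ := hle'
    have h4 : (Pi.single j 1 : Fin n₂ → ℝ) ⬝ᵥ Pi.single j 1 = 1 := by
      simp [dotProduct, Pi.single_apply]
    rw [h4, mul_one] at h1
    linarith
  have hσ'pos : 0 < σ' := by rw [hσ']; exact div_pos hσ hlmax
  have hslm : σ' * maxEig (A₂ᵀ * A₂) = σ := by
    rw [hσ']
    field_simp
  have hkey : ∀ v : Fin n₂ → ℝ,
      σ' * ((A₂.mulVec v) ⬝ᵥ (A₂.mulVec v)) ≤ σ * (v ⬝ᵥ v) := by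
    intro v
    calc σ' * ((A₂.mulVec v) ⬝ᵥ (A₂.mulVec v))
        ≤ σ' * (maxEig (A₂ᵀ * A₂) * (v ⬝ᵥ v)) :=
          mul_le_mul_of_nonneg_left (hbound v) hσ'pos.le
      _ = σ * (v ⬝ᵥ v) := by rw [← mul_assoc, hslm]
  -- the recursion residual identity
  have hq : lamk - lamt = β • (e + w) := by
    rw [hlamt, sub_sub_cancel, he, hw, mulVec_sub]
    congr 1
    abel
  have hwq : w ⬝ᵥ (lamk - lamt) = β * (w ⬝ᵥ e) + β * (w ⬝ᵥ w) := by
    rw [hq, dotProduct_smul, smul_eq_mul, dotProduct_add]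
    ring
  have hqq : (lamk - lamt) ⬝ᵥ (lamk - lamt)
      = β ^ 2 * ((e ⬝ᵥ e) + 2 * (w ⬝ᵥ e) + (w ⬝ᵥ w)) := by
    rw [hq, smul_dotProduct, dotProduct_smul, smul_eq_mul, smul_eq_mul,
      add_dotProduct, dotProduct_add, dotProduct_add, dotProduct_comm e w]
    ring
  -- the cross (strong monotonicity) inequality
  have h1 := hi x2k
  have h2 := hii x2kk
  have e1 : (x2k - x2kk) ⬝ᵥ (-(A₂ᵀ.mulVec lamk) + β • A₂ᵀ.mulVec e)
      = -(w ⬝ᵥ lamk) + β * (w ⬝ᵥ e) := by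
    rw [dotProduct_add, dotProduct_neg, dotProduct_smul, smul_eq_mul, dot_At', dot_At', hw]
  have e2 : (x2kk - x2k) ⬝ᵥ (-(A₂ᵀ.mulVec lamkm) + βm • A₂ᵀ.mulVec e₀)
      = (w ⬝ᵥ lamkm) - βm * (w ⬝ᵥ e₀) := by
    rw [show x2kk - x2k = -(x2k - x2kk) from (neg_sub _ _).symm, neg_dotProduct,
      dotProduct_add, dotProduct_neg, dotProduct_smul, smul_eq_mul, dot_At', dot_At', hw]
    ring
  have e3 : (x2kk - x2k) ⬝ᵥ (x2kk - x2k) = (x2k - x2kk) ⬝ᵥ (x2k - x2kk) := by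
    rw [show x2kk - x2k = -(x2k - x2kk) from (neg_sub _ _).symm, neg_dotProduct,
      dotProduct_neg, neg_neg]
  have e4 : w ⬝ᵥ lamkm - w ⬝ᵥ lamk = γ * βm * (w ⬝ᵥ e₀) := by
    rw [← dotProduct_sub, show lamkm - lamk = (γ * βm) • e₀ from by rw [hiii]; exact
      (sub_sub_cancel _ _), dotProduct_smul, smul_eq_mul]
  rw [e1, e3] at h1
  rw [e2] at h2
  have hcross : β * (w ⬝ᵥ e) + (γ - 1) * βm * (w ⬝ᵥ e₀)
      ≥ σ * ((x2k - x2kk) ⬝ᵥ (x2k - x2kk)) := by linarith [h1, h2, e4]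
  -- square expansion
  have hsqe : (β • w - ((γ - 1) * βm) • e₀) ⬝ᵥ (β • w - ((γ - 1) * βm) • e₀)
      = β ^ 2 * (w ⬝ᵥ w) - 2 * β * ((γ - 1) * βm) * (w ⬝ᵥ e₀)
        + ((γ - 1) * βm) ^ 2 * (e₀ ⬝ᵥ e₀) := by
    simp only [sub_dotProduct, dotProduct_sub, smul_dotProduct, dotProduct_smul,
      smul_eq_mul, dotProduct_comm e₀ w]
    ring
  have hsq : 0 ≤ β ^ 2 * (w ⬝ᵥ w) - 2 * β * ((γ - 1) * βm) * (w ⬝ᵥ e₀)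
      + ((γ - 1) * βm) ^ 2 * (e₀ ⬝ᵥ e₀) := by
    rw [← hsqe]
    exact dot_self_nonneg' _
  -- the golden ratio bound
  have h5 : Real.sqrt 5 * Real.sqrt 5 = 5 := Real.mul_self_sqrt (by norm_num)
  have hs1 : (1 : ℝ) ≤ Real.sqrt 5 := by nlinarith [Real.sqrt_nonneg 5]
  have hγ2 : γ ^ 2 ≤ γ + 1 := by
    have hmm : 0 ≤ (Real.sqrt 5 - (2 * γ - 1)) * (Real.sqrt 5 + (2 * γ - 1)) :=
      mul_nonneg (by linarith) (by linarith)
    nlinarith [hmm, h5]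
  -- rewrite the goal into scalar form
  rw [hH, hG, hH₀ βp, hH₀ β, qf_diagBlocks', qf_diagBlocks', qf_diagBlocks',
    qf_diagBlocks', qf_Gform', hΘ, hΘp, ← hw, hwq, hqq]
  exact final_ineq' β βm βp γ σ σ'
    ((A₂.mulVec (x2kk - x2')) ⬝ᵥ (A₂.mulVec (x2kk - x2')))
    ((A₂.mulVec (x2k - x2')) ⬝ᵥ (A₂.mulVec (x2k - x2')))
    ((x2kk - x2') ⬝ᵥ (x2kk - x2'))
    ((lamkk - lam) ⬝ᵥ (lamkk - lam)) ((lamk - lam) ⬝ᵥ (lamk - lam))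
    (w ⬝ᵥ w) (w ⬝ᵥ e) (e ⬝ᵥ e) (e₀ ⬝ᵥ e₀) (w ⬝ᵥ e₀)
    ((x2k - x2kk) ⬝ᵥ (x2k - x2kk))
    hβ hγ0 hγ2 hσ'pos hgrow (hkey _) (hkey (x2k - x2kk)) hcross
    (dot_self_nonneg' e) (dot_self_nonneg' e₀) (dot_self_nonneg' w) (dot_self_nonneg' _)
    hsq
end

section
/- Let A ∈ ℝ^{l×n}, r > σ_max(AᵀA), τ > 0, δ > 0, let (s^k)_{k≥0} be nonnegative reals, and let (x^k)_{k≥0} be a sequence in ℝⁿ such that for every k ≥ 0: s^{k+1} + τ δ² (k+1)² (x^k − x^{k+1})ᵀ( r I_n − AᵀA )(x^k − x^{k+1}) ≤ s^k. Then for every K ≥ 0: min_{0 ≤ k ≤ K} ‖x^k − x^{k+1}‖² ≤ 6 s^0 / ( τ δ² ( r − σ_max(AᵀA) ) (K+1)(K+2)(2K+3) ). -/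
open Matrix

theorem quad_expand' {n : ℕ} (B : Matrix (Fin n) (Fin n) ℝ) (hB : B.IsHermitian) (v : Fin n → ℝ) :
    ∃ w : Fin n → ℝ,
      v ⬝ᵥ B *ᵥ v = ∑ i, hB.eigenvalues i * w i ^ 2 ∧ v ⬝ᵥ v = ∑ i, w i ^ 2 := by
  set U : Matrix (Fin n) (Fin n) ℝ := (hB.eigenvectorUnitary : Matrix (Fin n) (Fin n) ℝ) with hU
  have hUst : star U = Uᵀ := by
    rw [Matrix.star_eq_conjTranspose, Matrix.conjTranspose_eq_transpose_of_trivial]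
  have key : v ᵥ* U ⬝ᵥ (v ᵥ* U) = v ⬝ᵥ v := by
    have h1 : U * star U = 1 := (Matrix.mem_unitaryGroup_iff).mp hB.eigenvectorUnitary.2
    calc v ᵥ* U ⬝ᵥ (v ᵥ* U) = v ᵥ* U ⬝ᵥ (Uᵀ *ᵥ v) := by rw [Matrix.mulVec_transpose]
      _ = (v ᵥ* U) ᵥ* Uᵀ ⬝ᵥ v := by rw [Matrix.dotProduct_mulVec]
      _ = v ᵥ* (U * Uᵀ) ⬝ᵥ v := by rw [Matrix.vecMul_vecMul]
      _ = v ⬝ᵥ v := by rw [← hUst, h1, Matrix.vecMul_one]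
  refine ⟨v ᵥ* U, ?_, ?_⟩
  · conv_lhs => rw [hB.spectral_theorem, Unitary.conjStarAlgAut_apply, ← hU]
    rw [← Matrix.mulVec_mulVec, ← Matrix.mulVec_mulVec, Matrix.dotProduct_mulVec,
      hUst, Matrix.mulVec_transpose]
    simp [Matrix.mulVec_diagonal, dotProduct, Finset.mul_sum]
    exact Finset.sum_congr rfl fun i _ => by ring
  · rw [← key]; simp [dotProduct, sq]

theorem quad_le_maxEig' {n : ℕ} (B : Matrix (Fin n) (Fin n) ℝ) (hB : B.IsHermitian)
    (v : Fin n → ℝ) : v ⬝ᵥ B *ᵥ v ≤ maxEig B * (v ⬝ᵥ v) := by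
  rcases Nat.eq_zero_or_pos n with hn | hn
  · subst hn; simp [dotProduct]
  haveI : Nonempty (Fin n) := ⟨⟨0, hn⟩⟩
  set S := {μ : ℝ | ∃ u : Fin n → ℝ, u ≠ 0 ∧ B.mulVec u = μ • u} with hS
  set T := Finset.univ.sup' Finset.univ_nonempty hB.eigenvalues with hT
  have hmem : ∀ i, hB.eigenvalues i ∈ S := by
    intro i
    refine ⟨hB.eigenvectorBasis i, ?_, hB.mulVec_eigenvectorBasis i⟩
    exact by simpa using hB.eigenvectorBasis.orthonormal.ne_zero i
  have hbound : ∀ μ ∈ S, μ ≤ T := by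
    rintro μ ⟨u, hu0, huB⟩
    obtain ⟨w, h1, h2⟩ := quad_expand' B hB u
    have hupos : 0 < u ⬝ᵥ u := by
      rcases (Finset.sum_nonneg fun i _ => mul_self_nonneg (u i) : (0:ℝ) ≤ u ⬝ᵥ u).lt_or_eq
        with h | h
      · exact h
      · exact absurd (dotProduct_self_eq_zero.mp h.symm) hu0
    have : μ * (u ⬝ᵥ u) ≤ T * (u ⬝ᵥ u) := by
      calc μ * (u ⬝ᵥ u) = u ⬝ᵥ B *ᵥ u := by
            rw [huB]; simp [dotProduct_smul, smul_eq_mul]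
        _ = ∑ i, hB.eigenvalues i * w i ^ 2 := h1
        _ ≤ ∑ i, T * w i ^ 2 := by
            refine Finset.sum_le_sum fun i _ => ?_
            exact mul_le_mul_of_nonneg_right
              (Finset.le_sup' hB.eigenvalues (Finset.mem_univ i)) (sq_nonneg _)
        _ = T * (u ⬝ᵥ u) := by rw [h2, Finset.mul_sum]
    exact le_of_mul_le_mul_right this hupos
  obtain ⟨i₀, -, hi₀⟩ := Finset.exists_mem_eq_sup' Finset.univ_nonempty hB.eigenvalues
  have hTS : T ∈ S := by rw [hT, hi₀]; exact hmem i₀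
  have hmax : maxEig B = T :=
    le_antisymm (csSup_le ⟨T, hTS⟩ hbound) (le_csSup ⟨T, fun μ hμ => hbound μ hμ⟩ hTS)
  obtain ⟨w, h1, h2⟩ := quad_expand' B hB v
  rw [h1, h2, hmax, Finset.mul_sum]
  exact Finset.sum_le_sum fun i _ => mul_le_mul_of_nonneg_right
    (Finset.le_sup' hB.eigenvalues (Finset.mem_univ i)) (sq_nonneg _)

/-- Remark 3.2 made precise: if a nonnegative sequence `sᵏ` satisfies
`s^{k+1} + τδ²(k+1)²(xᵏ - x^{k+1})ᵀ(rI - AᵀA)(xᵏ - x^{k+1}) ≤ sᵏ` for all `k`,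
with `r > σ_max(AᵀA)`, then
`min_{0≤k≤K} ‖xᵏ - x^{k+1}‖² ≤ 6s⁰/(τδ²(r - σ_max(AᵀA))(K+1)(K+2)(2K+3))`. -/
theorem stmt19 {n l : ℕ}
    (A : Matrix (Fin l) (Fin n) ℝ)
    (r : ℝ) (hr : maxEig (Aᵀ * A) < r)
    (τ δ : ℝ) (hτ : 0 < τ) (hδ : 0 < δ)
    (s : ℕ → ℝ) (hs : ∀ k, 0 ≤ s k)
    (x : ℕ → Fin n → ℝ)
    (hstep : ∀ k : ℕ,
      s (k + 1) + τ * δ ^ 2 * ((k : ℝ) + 1) ^ 2 *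
          ((x k - x (k + 1)) ⬝ᵥ
            ((r • (1 : Matrix (Fin n) (Fin n) ℝ) - Aᵀ * A).mulVec (x k - x (k + 1))))
        ≤ s k) :
    ∀ K : ℕ,
      (Finset.range (K + 1)).inf' Finset.nonempty_range_add_one
          (fun k => (x k - x (k + 1)) ⬝ᵥ (x k - x (k + 1)))
        ≤ 6 * s 0 / (τ * δ ^ 2 * (r - maxEig (Aᵀ * A))
            * ((K : ℝ) + 1) * ((K : ℝ) + 2) * (2 * (K : ℝ) + 3)) := by
  have hB : (Aᵀ * A).IsHermitian := by
    rw [Matrix.IsHermitian, Matrix.conjTranspose_eq_transpose_of_trivial,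
      Matrix.transpose_mul, Matrix.transpose_transpose]
  set σ := maxEig (Aᵀ * A) with hσ
  have hrσ : 0 < r - σ := sub_pos.mpr hr
  set d : ℕ → ℝ := fun k => (x k - x (k + 1)) ⬝ᵥ (x k - x (k + 1)) with hd
  set c : ℝ := τ * δ ^ 2 * (r - σ) with hc
  have hcpos : 0 < c := by positivity
  have key : ∀ v : Fin n → ℝ,
      (r - σ) * (v ⬝ᵥ v) ≤ v ⬝ᵥ ((r • (1 : Matrix (Fin n) (Fin n) ℝ) - Aᵀ * A) *ᵥ v) := by
    intro v
    have h1 : v ⬝ᵥ ((r • (1 : Matrix (Fin n) (Fin n) ℝ) - Aᵀ * A) *ᵥ v)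
        = r * (v ⬝ᵥ v) - v ⬝ᵥ ((Aᵀ * A) *ᵥ v) := by
      rw [Matrix.sub_mulVec, dotProduct_sub, Matrix.smul_mulVec,
        Matrix.one_mulVec, dotProduct_smul, smul_eq_mul]
    have h2 := quad_le_maxEig' (Aᵀ * A) hB v
    rw [h1]; rw [← hσ] at h2; linarith [h2]
  have hstep' : ∀ k : ℕ, s (k + 1) + c * ((k : ℝ) + 1) ^ 2 * d k ≤ s k := by
    intro k
    have h0 := hstep k
    have hm : (0:ℝ) ≤ τ * δ ^ 2 * ((k : ℝ) + 1) ^ 2 := by positivity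
    have h1 := mul_le_mul_of_nonneg_left (key (x k - x (k + 1))) hm
    calc s (k + 1) + c * ((k : ℝ) + 1) ^ 2 * d k
        = s (k + 1) + τ * δ ^ 2 * ((k : ℝ) + 1) ^ 2 * ((r - σ) * d k) := by ring
      _ ≤ s (k + 1) + τ * δ ^ 2 * ((k : ℝ) + 1) ^ 2 *
            ((x k - x (k + 1)) ⬝ᵥ
              ((r • (1 : Matrix (Fin n) (Fin n) ℝ) - Aᵀ * A) *ᵥ (x k - x (k + 1)))) := by
          linarith [h1]
      _ ≤ s k := h0
  have hsum : ∀ K : ℕ,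
      s (K + 1) + ∑ k ∈ Finset.range (K + 1), c * ((k : ℝ) + 1) ^ 2 * d k ≤ s 0 := by
    intro K
    induction K with
    | zero => simpa using hstep' 0
    | succ K ih =>
        rw [Finset.sum_range_succ]
        have := hstep' (K + 1)
        push_cast at this ⊢
        linarith
  have hQ : ∀ K : ℕ, (∑ k ∈ Finset.range (K + 1), ((k : ℝ) + 1) ^ 2)
      = ((K : ℝ) + 1) * ((K : ℝ) + 2) * (2 * (K : ℝ) + 3) / 6 := by
    intro K
    induction K with
    | zero => norm_num
    | succ K ih => rw [Finset.sum_range_succ, ih]; push_cast; ring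
  intro K
  set m := (Finset.range (K + 1)).inf' Finset.nonempty_range_add_one
      (fun k => (x k - x (k + 1)) ⬝ᵥ (x k - x (k + 1))) with hm
  have hmle : ∀ k ∈ Finset.range (K + 1), m ≤ d k := fun k hk =>
    Finset.inf'_le _ hk
  have hterm : ∀ k ∈ Finset.range (K + 1),
      c * ((k : ℝ) + 1) ^ 2 * m ≤ c * ((k : ℝ) + 1) ^ 2 * d k := by
    intro k hk
    exact mul_le_mul_of_nonneg_left (hmle k hk) (by positivity)
  have hkey : c * m * (∑ k ∈ Finset.range (K + 1), ((k : ℝ) + 1) ^ 2) ≤ s 0 := by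
    have h1 : ∑ k ∈ Finset.range (K + 1), c * ((k : ℝ) + 1) ^ 2 * m
        = c * m * (∑ k ∈ Finset.range (K + 1), ((k : ℝ) + 1) ^ 2) := by
      rw [Finset.mul_sum]
      exact Finset.sum_congr rfl fun k _ => by ring
    have h2 := Finset.sum_le_sum hterm
    have h3 := hsum K
    have h4 := hs (K + 1)
    linarith [h1 ▸ h2]
  have hden : (0:ℝ) < c * ((K : ℝ) + 1) * ((K : ℝ) + 2) * (2 * (K : ℝ) + 3) := by
    positivity
  have hgoal : m * (c * ((K : ℝ) + 1) * ((K : ℝ) + 2) * (2 * (K : ℝ) + 3)) ≤ 6 * s 0 := by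
    rw [hQ K] at hkey
    linarith
  calc m ≤ 6 * s 0 / (c * ((K : ℝ) + 1) * ((K : ℝ) + 2) * (2 * (K : ℝ) + 3)) := by
        rw [le_div_iff₀ hden]; exact hgoal
    _ = 6 * s 0 / (τ * δ ^ 2 * (r - σ) * ((K : ℝ) + 1) * ((K : ℝ) + 2) * (2 * (K : ℝ) + 3)) := by
        rw [hc]
end
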